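/- For any integers 1 ≤ s ≤ d, any v, ṽ ∈ V(s,d) having the same support, any positive definite d×d matrix Σ, and any real symmetric d×d matrix M, it holds that | |v_Σᵀ M v_Σ| − |ṽ_Σᵀ M ṽ_Σ| | ≤ 2 γ_s(Σ) ‖v − ṽ‖₂ · sup_{w ∈ V(s,d)} |w_Σᵀ M w_Σ|. -/

import Mathlib

open MeasureTheory ProbabilityTheory Filter Finset
open scoped ENNReal NNReal

noncomputable section

/-- The set of `s`-sparse unit vectors in `ℝ^d`. -/
def sparseUnit (s d : ℕ) : Set (Fin d → ℝ) :=
  {v | ∑ i, (v i)^2 = 1 ∧ (Finset.univ.filter fun i => v i ≠ 0).card ≤ s}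

/-- Quadratic form `vᵀ M v`. -/
def quadForm {d : ℕ} (M : Matrix (Fin d) (Fin d) ℝ) (v : Fin d → ℝ) : ℝ :=
  ∑ i, ∑ j, v i * M i j * v j

/-- `s`-sparse largest eigenvalue. -/
def lamMaxS (s d : ℕ) (M : Matrix (Fin d) (Fin d) ℝ) : ℝ :=
  sSup (quadForm M '' sparseUnit s d)

/-- `s`-sparse smallest eigenvalue. -/
def lamMinS (s d : ℕ) (M : Matrix (Fin d) (Fin d) ℝ) : ℝ :=
  sInf (quadForm M '' sparseUnit s d)

/-- The restricted condition number `γ_s(M)`. -/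
def gammaS (s d : ℕ) (M : Matrix (Fin d) (Fin d) ℝ) : ℝ :=
  Real.sqrt (lamMaxS s d M / lamMinS s d M)

/-- Euclidean norm on `Fin d → ℝ`. -/
def l2norm {d : ℕ} (v : Fin d → ℝ) : ℝ := Real.sqrt (∑ i, (v i)^2)

/-- `ψ_α` Orlicz norm (valued in `ℝ≥0∞`). -/
def eOrlicz {Ω : Type*} [MeasurableSpace Ω] (P : Measure Ω) (α : ℝ) (X : Ω → ℝ) : ℝ≥0∞ :=
  sInf {C : ℝ≥0∞ | C ≠ 0 ∧
    ∫⁻ ω, ENNReal.ofReal (Real.exp ((|X ω| / C.toReal) ^ α) - 1) ∂P ≤ 1}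

/-- Outer product `x xᵀ`. -/
def outerProd {d : ℕ} (x : Fin d → ℝ) : Matrix (Fin d) (Fin d) ℝ :=
  Matrix.of fun i j => x i * x j

/-- Sample covariance matrix of vectors `x 1, …, x n`. -/
def sampleCov {n d : ℕ} (x : Fin n → Fin d → ℝ) : Matrix (Fin d) (Fin d) ℝ :=
  (n : ℝ)⁻¹ • ∑ i, outerProd (x i)

/-- A centered Gaussian random vector: every linear combination of the coordinates is
a centered real Gaussian. -/
def IsCenteredGaussianVec {Ω : Type*} [MeasurableSpace Ω] (P : Measure Ω) {p : ℕ}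
    (G : Fin p → Ω → ℝ) : Prop :=
  ∀ a : Fin p → ℝ, ∃ v : NNReal,
    Measure.map (fun ω => ∑ j, a j * G j ω) P = gaussianReal 0 v

/-- The statistic `Q̂_max`. -/
def QmaxStat (s : ℕ) {n d : ℕ} (S : Matrix (Fin d) (Fin d) ℝ) (x : Fin n → Fin d → ℝ) : ℝ :=
  sSup ((fun v => |Real.sqrt n * quadForm (sampleCov x - S) v / quadForm S v|) '' sparseUnit s d)

/-- `γ_n(s,d) = max(s log(γ_s e d / s), s log n)`. -/
def gammaN (s d n : ℕ) (S : Matrix (Fin d) (Fin d) ℝ) : ℝ :=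
  max ((s : ℝ) * Real.log (gammaS s d S * Real.exp 1 * d / s)) ((s : ℝ) * Real.log n)

end

/-- `v_Σ = v / ‖v‖_Σ` where `‖v‖_Σ = (vᵀ Σ v)^{1/2}`. -/
noncomputable def sigNormalize {d : ℕ} (S : Matrix (Fin d) (Fin d) ℝ) (v : Fin d → ℝ) :
    Fin d → ℝ :=
  (Real.sqrt (quadForm S v))⁻¹ • v

section NetAux
open Finset
variable {d : ℕ}

noncomputable def Bform (S : Matrix (Fin d) (Fin d) ℝ) (x y : Fin d → ℝ) : ℝ :=
  ∑ i, ∑ j, x i * S i j * y j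

lemma quadForm_eq_Bform (S : Matrix (Fin d) (Fin d) ℝ) (x : Fin d → ℝ) :
    quadForm S x = Bform S x x := rfl

lemma Bform_add_left (S : Matrix (Fin d) (Fin d) ℝ) (x y z : Fin d → ℝ) :
    Bform S (x + y) z = Bform S x z + Bform S y z := by
  simp [Bform, add_mul, Finset.sum_add_distrib]

lemma Bform_add_right (S : Matrix (Fin d) (Fin d) ℝ) (x y z : Fin d → ℝ) :
    Bform S x (y + z) = Bform S x y + Bform S x z := by
  simp [Bform, mul_add, Finset.sum_add_distrib]

lemma Bform_smul_left (S : Matrix (Fin d) (Fin d) ℝ) (c : ℝ) (x y : Fin d → ℝ) :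
    Bform S (c • x) y = c * Bform S x y := by
  simp only [Bform, Pi.smul_apply, smul_eq_mul, Finset.mul_sum]
  exact Finset.sum_congr rfl fun i _ => Finset.sum_congr rfl fun j _ => by ring

lemma Bform_smul_right (S : Matrix (Fin d) (Fin d) ℝ) (c : ℝ) (x y : Fin d → ℝ) :
    Bform S x (c • y) = c * Bform S x y := by
  simp only [Bform, Pi.smul_apply, smul_eq_mul, Finset.mul_sum]
  exact Finset.sum_congr rfl fun i _ => Finset.sum_congr rfl fun j _ => by ring

lemma Bform_sub_left (S : Matrix (Fin d) (Fin d) ℝ) (x y z : Fin d → ℝ) :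
    Bform S (x - y) z = Bform S x z - Bform S y z := by
  simp [Bform, sub_mul, Finset.sum_sub_distrib]

lemma Bform_sub_right (S : Matrix (Fin d) (Fin d) ℝ) (x y z : Fin d → ℝ) :
    Bform S x (y - z) = Bform S x y - Bform S x z := by
  simp [Bform, mul_sub, Finset.sum_sub_distrib]

lemma Bform_comm {S : Matrix (Fin d) (Fin d) ℝ} (hsym : ∀ i j, S i j = S j i)
    (x y : Fin d → ℝ) : Bform S x y = Bform S y x := by
  rw [Bform, Finset.sum_comm]
  exact Finset.sum_congr rfl fun j _ => Finset.sum_congr rfl fun i _ => by rw [hsym i j]; ring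

lemma quadForm_smul (M : Matrix (Fin d) (Fin d) ℝ) (c : ℝ) (x : Fin d → ℝ) :
    quadForm M (c • x) = c^2 * quadForm M x := by
  simp only [quadForm, Pi.smul_apply, smul_eq_mul, Finset.mul_sum]
  exact Finset.sum_congr rfl fun i _ => Finset.sum_congr rfl fun j _ => by ring

lemma quadForm_pos {S : Matrix (Fin d) (Fin d) ℝ} (hS : S.PosDef) {x : Fin d → ℝ}
    (hx : x ≠ 0) : 0 < quadForm S x := by
  have h := hS.dotProduct_mulVec_pos hx
  simpa [quadForm, dotProduct, Matrix.mulVec, Finset.mul_sum, mul_assoc] using h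

lemma quadForm_nonneg {S : Matrix (Fin d) (Fin d) ℝ} (hS : S.PosDef) (x : Fin d → ℝ) :
    0 ≤ quadForm S x := by
  rcases eq_or_ne x 0 with rfl | hx
  · simp [quadForm]
  · exact (quadForm_pos hS hx).le

lemma Bform_sq_le {S : Matrix (Fin d) (Fin d) ℝ} (hS : S.PosDef)
    (hsym : ∀ i j, S i j = S j i) (x y : Fin d → ℝ) :
    (Bform S x y)^2 ≤ quadForm S x * quadForm S y := by
  rcases eq_or_ne y 0 with rfl | hy
  · simp [Bform, quadForm]
  · have hqy : 0 < quadForm S y := quadForm_pos hS hy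
    have hexp : ∀ t : ℝ, 0 ≤ Bform S x x - 2*t*Bform S x y + t^2 * Bform S y y := by
      intro t
      have h := quadForm_nonneg hS (x - t • y)
      rw [quadForm_eq_Bform, Bform_sub_left, Bform_sub_right, Bform_sub_right,
        Bform_smul_left, Bform_smul_right, Bform_smul_left, Bform_smul_right,
        Bform_comm hsym y x] at h
      nlinarith [h]
    have h := hexp (Bform S x y / Bform S y y)
    rw [quadForm_eq_Bform S y] at hqy
    rw [quadForm_eq_Bform S x, quadForm_eq_Bform S y]
    have hne := hqy.ne'
    field_simp at h
    nlinarith [h, hqy, mul_pos hqy hqy]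

lemma sum_sq_pos {z : Fin d → ℝ} (hz : z ≠ 0) : 0 < ∑ i, (z i)^2 := by
  obtain ⟨i, hi⟩ := Function.ne_iff.mp hz
  exact Finset.sum_pos' (fun j _ => sq_nonneg _) ⟨i, Finset.mem_univ i, lt_of_le_of_ne (sq_nonneg _) (Ne.symm (pow_ne_zero 2 hi))⟩

lemma quadForm_abs_le_of_unit (M : Matrix (Fin d) (Fin d) ℝ) (u : Fin d → ℝ)
    (hu : ∑ i, (u i)^2 = 1) : |quadForm M u| ≤ ∑ i, ∑ j, |M i j| := by
  have hub : ∀ i, |u i| ≤ 1 := by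
    intro i
    have h1 : (u i)^2 ≤ 1 := hu ▸ Finset.single_le_sum (fun j _ => sq_nonneg (u j))
      (Finset.mem_univ i)
    rw [← Real.sqrt_one, ← Real.sqrt_sq_eq_abs]
    exact Real.sqrt_le_sqrt h1
  calc |quadForm M u| ≤ ∑ i, |∑ j, u i * M i j * u j| :=
        Finset.abs_sum_le_sum_abs _ _
    _ ≤ ∑ i, ∑ j, |u i * M i j * u j| :=
        Finset.sum_le_sum fun i _ => Finset.abs_sum_le_sum_abs _ _
    _ ≤ ∑ i, ∑ j, |M i j| := by
        refine Finset.sum_le_sum fun i _ => Finset.sum_le_sum fun j _ => ?_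
        rw [abs_mul, abs_mul]
        calc |u i| * |M i j| * |u j| ≤ 1 * |M i j| * 1 := by
              apply mul_le_mul (mul_le_mul (hub i) le_rfl (abs_nonneg _) zero_le_one)
                (hub j) (abs_nonneg _)
              positivity
          _ = |M i j| := by ring

lemma exists_pos_lb (S : Matrix (Fin d) (Fin d) ℝ) (hS : S.PosDef) :
    ∃ c > 0, ∀ u : Fin d → ℝ, (∑ i, (u i)^2 = 1) → c ≤ quadForm S u := by
  set K : Set (Fin d → ℝ) := {u | ∑ i, (u i)^2 = 1} with hK
  by_cases hKn : K.Nonempty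
  · have hcont : Continuous fun u : Fin d → ℝ => quadForm S u := by
      unfold quadForm
      exact continuous_finset_sum _ fun i _ => continuous_finset_sum _ fun j _ =>
        ((continuous_apply i).mul continuous_const).mul (continuous_apply j)
    have hcl : IsClosed K :=
      isClosed_eq (continuous_finset_sum _ fun i _ => (continuous_apply i).pow 2)
        continuous_const
    have hbd : Bornology.IsBounded K := by
      apply (Metric.isBounded_closedBall (x := (0 : Fin d → ℝ)) (r := 1)).subset
      intro u hu
      simp only [Metric.mem_closedBall, dist_zero_right]
      rw [pi_norm_le_iff_of_nonneg zero_le_one]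
      intro i
      have h1 : (u i)^2 ≤ 1 := hu ▸ Finset.single_le_sum (fun j _ => sq_nonneg (u j))
        (Finset.mem_univ i)
      rw [Real.norm_eq_abs, ← Real.sqrt_one, ← Real.sqrt_sq_eq_abs]
      exact Real.sqrt_le_sqrt h1
    obtain ⟨u0, hu0K, hmin⟩ :=
      (Metric.isCompact_of_isClosed_isBounded hcl hbd).exists_isMinOn hKn hcont.continuousOn
    have hu0 : u0 ≠ 0 := by
      intro h
      rw [hK] at hu0K
      simp [h] at hu0K
    exact ⟨quadForm S u0, quadForm_pos hS hu0, fun u hu => hmin hu⟩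
  · exact ⟨1, one_pos, fun u hu => absurd ⟨u, hu⟩ hKn⟩

lemma sigNormalize_smul {S : Matrix (Fin d) (Fin d) ℝ} {x : Fin d → ℝ}
    (hq : 0 < quadForm S x) {c : ℝ} (hc : 0 < c) :
    sigNormalize S (c • x) = sigNormalize S x := by
  unfold sigNormalize
  rw [quadForm_smul, Real.sqrt_mul (sq_nonneg c), Real.sqrt_sq hc.le, smul_smul]
  congr 1
  have h : Real.sqrt (quadForm S x) ≠ 0 := (Real.sqrt_pos.mpr hq).ne'
  field_simp

lemma net_alg (A B T : ℝ) (hA : 0 < A) (hB : 0 < B) (hT : -(A*B) ≤ T) :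
    (2*(A*B) - 2*T)*(A+B)^2 ≤ 4*(A^2+B^2-2*T)*(A*B) := by
  nlinarith [mul_nonneg (sq_nonneg (A-B)) (by linarith : (0:ℝ) ≤ A*B + T)]

lemma net_alg2 (A B L : ℝ) (hL : 0 ≤ L) (hA : Real.sqrt L ≤ A) (hB : Real.sqrt L ≤ B) :
    4 * L ≤ (A + B)^2 := by
  nlinarith [Real.sq_sqrt hL, Real.sqrt_nonneg L]

end NetAux

set_option maxHeartbeats 1000000 in
/-- **Lemma 3** (generalized ε-net argument for the rescaled spectral norm). -/
theorem rescaled_quadform_net_bound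
    (s d : ℕ) (hs : 1 ≤ s) (hsd : s ≤ d)
    (S : Matrix (Fin d) (Fin d) ℝ) (hS : S.PosDef)
    (M : Matrix (Fin d) (Fin d) ℝ) (hM : M.IsSymm)
    (v w : Fin d → ℝ) (hv : v ∈ sparseUnit s d) (hw : w ∈ sparseUnit s d)
    (hsupp : ∀ i, v i = 0 ↔ w i = 0) :
    |(|quadForm M (sigNormalize S v)| - |quadForm M (sigNormalize S w)|)| ≤
      2 * gammaS s d S * l2norm (v - w) *
        sSup ((fun u => |quadForm M (sigNormalize S u)|) '' sparseUnit s d) := by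
  classical
  obtain ⟨hv1, hvs⟩ := hv
  obtain ⟨hw1, hws⟩ := hw
  have hMsym : ∀ i j, M i j = M j i := fun i j => hM.apply j i
  have hSsym : ∀ i j, S i j = S j i := by
    intro i j
    have h := congrFun (congrFun hS.isHermitian j) i
    simpa [Matrix.conjTranspose_apply] using h
  set Q := sSup ((fun u => |quadForm M (sigNormalize S u)|) '' sparseUnit s d) with hQdef
  obtain ⟨c, hc, hlb⟩ := exists_pos_lb S hS
  set CM := ∑ i, ∑ j, |M i j| with hCMdef
  have hCM0 : 0 ≤ CM := Finset.sum_nonneg fun i _ => Finset.sum_nonneg fun j _ => abs_nonneg _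
  have hv0 : v ≠ 0 := by intro h; rw [h] at hv1; simp at hv1
  have hw0 : w ≠ 0 := by intro h; rw [h] at hw1; simp at hw1
  have hqv_pos : 0 < quadForm S v := quadForm_pos hS hv0
  have hqw_pos : 0 < quadForm S w := quadForm_pos hS hw0
  have hfval : ∀ u : Fin d → ℝ, u ≠ 0 →
      quadForm M (sigNormalize S u) = quadForm M u / quadForm S u := by
    intro u hu
    unfold sigNormalize
    rw [quadForm_smul, inv_pow, Real.sq_sqrt (quadForm_nonneg hS u), inv_mul_eq_div]
  have hub : ∀ u ∈ sparseUnit s d, |quadForm M (sigNormalize S u)| ≤ CM / c := by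
    rintro u ⟨hu1, hus⟩
    have hu0 : u ≠ 0 := by intro h; rw [h] at hu1; simp at hu1
    rw [hfval u hu0, abs_div, abs_of_pos (quadForm_pos hS hu0)]
    exact div_le_div₀ hCM0 (quadForm_abs_le_of_unit M u hu1) hc (hlb u hu1)
  have hbdd : BddAbove ((fun u => |quadForm M (sigNormalize S u)|) '' sparseUnit s d) := by
    refine ⟨CM / c, ?_⟩
    rintro x ⟨u, hu, rfl⟩
    exact hub u hu
  have hQmem : ∀ u ∈ sparseUnit s d, |quadForm M (sigNormalize S u)| ≤ Q :=
    fun u hu => le_csSup hbdd ⟨u, hu, rfl⟩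
  have hQ0 : 0 ≤ Q := le_trans (abs_nonneg _) (hQmem v ⟨hv1, hvs⟩)
  -- key: rescaled bound for sparse vectors supported in supp v
  have key : ∀ z : Fin d → ℝ, (∀ i, v i = 0 → z i = 0) →
      |quadForm M z| ≤ Q * quadForm S z := by
    intro z hz
    rcases eq_or_ne z 0 with rfl | hz0
    · simp [quadForm]
    · have hqz := quadForm_pos hS hz0
      have hsum := sum_sq_pos hz0
      have hn : 0 < Real.sqrt (∑ i, (z i)^2) := Real.sqrt_pos.mpr hsum
      set u := (Real.sqrt (∑ i, (z i)^2))⁻¹ • z with hudef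
      have husum : ∑ i, (u i)^2 = 1 := by
        rw [hudef]
        simp only [Pi.smul_apply, smul_eq_mul, mul_pow]
        rw [← Finset.mul_sum, inv_pow, Real.sq_sqrt hsum.le]
        exact inv_mul_cancel₀ hsum.ne'
      have huspars : (Finset.univ.filter fun i => u i ≠ 0).card ≤ s := by
        refine le_trans (Finset.card_le_card ?_) hvs
        intro i hi
        simp only [Finset.mem_filter, Finset.mem_univ, true_and] at hi ⊢
        intro hvi
        exact hi (by rw [hudef]; simp [hz i hvi])
      have heq : sigNormalize S u = sigNormalize S z := by
        rw [hudef]; exact sigNormalize_smul hqz (inv_pos.mpr hn)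
      have h1 := hQmem u ⟨husum, huspars⟩
      rw [heq, hfval z hz0, abs_div, abs_of_pos hqz, div_le_iff₀ hqz] at h1
      exact h1
  -- bilinear bound
  have keyB : ∀ x y : Fin d → ℝ, (∀ i, v i = 0 → x i = 0) → (∀ i, v i = 0 → y i = 0) →
      |Bform M x y| ≤ Q * Real.sqrt (quadForm S x) * Real.sqrt (quadForm S y) := by
    intro x y hx hy
    rcases eq_or_ne x 0 with rfl | hx0
    · simp only [Bform, Pi.zero_apply, zero_mul, Finset.sum_const_zero, abs_zero]
      positivity
    rcases eq_or_ne y 0 with rfl | hy0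
    · simp only [Bform, Pi.zero_apply, mul_zero, zero_mul, Finset.sum_const_zero, abs_zero]
      positivity
    have hqx := quadForm_pos hS hx0
    have hqy := quadForm_pos hS hy0
    set sx := Real.sqrt (quadForm S x) with hsxdef
    set sy := Real.sqrt (quadForm S y) with hsydef
    have hsx : 0 < sx := Real.sqrt_pos.mpr hqx
    have hsy : 0 < sy := Real.sqrt_pos.mpr hqy
    have hsx2 : sx^2 = quadForm S x := by rw [hsxdef]; exact Real.sq_sqrt hqx.le
    have hsy2 : sy^2 = quadForm S y := by rw [hsydef]; exact Real.sq_sqrt hqy.le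
    set x' := sx⁻¹ • x with hx'def
    set y' := sy⁻¹ • y with hy'def
    have hqx' : quadForm S x' = 1 := by
      rw [hx'def, quadForm_smul, inv_pow, hsx2]
      exact inv_mul_cancel₀ hqx.ne'
    have hqy' : quadForm S y' = 1 := by
      rw [hy'def, quadForm_smul, inv_pow, hsy2]
      exact inv_mul_cancel₀ hqy.ne'
    have hx's : ∀ i, v i = 0 → x' i = 0 := by
      intro i h; rw [hx'def]; simp [hx i h]
    have hy's : ∀ i, v i = 0 → y' i = 0 := by
      intro i h; rw [hy'def]; simp [hy i h]
    have hpol : quadForm M (x' + y') - quadForm M (x' - y') = 4 * Bform M x' y' := by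
      simp only [quadForm_eq_Bform, Bform_add_left, Bform_add_right, Bform_sub_left,
        Bform_sub_right]
      rw [Bform_comm hMsym y' x']; ring
    have hS1 := key (x' + y') (fun i h => by simp [hx's i h, hy's i h])
    have hS2 := key (x' - y') (fun i h => by simp [hx's i h, hy's i h])
    have hpar : quadForm S (x' + y') + quadForm S (x' - y') = 4 := by
      have e : quadForm S (x' + y') + quadForm S (x' - y') =
          2 * quadForm S x' + 2 * quadForm S y' := by
        simp only [quadForm_eq_Bform, Bform_add_left, Bform_add_right, Bform_sub_left,
          Bform_sub_right]
        rw [Bform_comm hSsym y' x']; ring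
      rw [e, hqx', hqy']; norm_num
    have hB' : |Bform M x' y'| ≤ Q := by
      have h4 : |4 * Bform M x' y'| ≤ 4 * Q := by
        rw [← hpol]
        calc |quadForm M (x' + y') - quadForm M (x' - y')|
            ≤ |quadForm M (x' + y')| + |quadForm M (x' - y')| := abs_sub _ _
          _ ≤ Q * quadForm S (x' + y') + Q * quadForm S (x' - y') := add_le_add hS1 hS2
          _ = 4 * Q := by rw [← mul_add, hpar]; ring
      rw [abs_mul] at h4
      have : |(4:ℝ)| = 4 := by norm_num
      rw [this] at h4
      linarith
    have hxy : |Bform M x y| = sx * sy * |Bform M x' y'| := by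
      rw [hx'def, hy'def, Bform_smul_left, Bform_smul_right, abs_mul, abs_mul, abs_inv,
        abs_inv, abs_of_pos hsx, abs_of_pos hsy]
      field_simp
    rw [hxy]
    calc sx * sy * |Bform M x' y'| ≤ sx * sy * Q :=
          mul_le_mul_of_nonneg_left hB' (by positivity)
      _ = Q * sx * sy := by ring
  -- main computation
  set a := sigNormalize S v with hadef0
  set b := sigNormalize S w with hbdef0
  set α := Real.sqrt (quadForm S v) with hαdef
  set β := Real.sqrt (quadForm S w) with hβdef
  have hα : 0 < α := Real.sqrt_pos.mpr hqv_pos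
  have hβ : 0 < β := Real.sqrt_pos.mpr hqw_pos
  have hα2 : α^2 = quadForm S v := by rw [hαdef]; exact Real.sq_sqrt hqv_pos.le
  have hβ2 : β^2 = quadForm S w := by rw [hβdef]; exact Real.sq_sqrt hqw_pos.le
  have hadef : a = α⁻¹ • v := rfl
  have hbdef : b = β⁻¹ • w := rfl
  have hqa : quadForm S a = 1 := by
    rw [hadef, quadForm_smul, inv_pow, hα2]; exact inv_mul_cancel₀ hqv_pos.ne'
  have hqb : quadForm S b = 1 := by
    rw [hbdef, quadForm_smul, inv_pow, hβ2]; exact inv_mul_cancel₀ hqw_pos.ne'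
  have has : ∀ i, v i = 0 → a i = 0 := by intro i h; rw [hadef]; simp [h]
  have hbs : ∀ i, v i = 0 → b i = 0 := by
    intro i h; rw [hbdef]; simp [(hsupp i).mp h]
  have hdiff : quadForm M a - quadForm M b = Bform M (a - b) (a + b) := by
    simp only [quadForm_eq_Bform, Bform_sub_left, Bform_add_right]
    rw [Bform_comm hMsym b a]; ring
  -- bound for sqrt (quadForm S (a+b))
  have hBab_sq := Bform_sq_le hS hSsym a b
  rw [hqa, hqb] at hBab_sq
  have hBab : Bform S a b ≤ 1 := by nlinarith [sq_nonneg (Bform S a b - 1)]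
  have hq4 : quadForm S (a + b) ≤ 4 := by
    have e : quadForm S (a + b) = quadForm S a + 2 * Bform S a b + quadForm S b := by
      simp only [quadForm_eq_Bform, Bform_add_left, Bform_add_right]
      rw [Bform_comm hSsym b a]; ring
    rw [e, hqa, hqb]; linarith
  have bound2 : Real.sqrt (quadForm S (a + b)) ≤ 2 := by
    calc Real.sqrt (quadForm S (a + b)) ≤ Real.sqrt 4 := Real.sqrt_le_sqrt hq4
      _ = 2 := by
          rw [show (4:ℝ) = 2^2 by norm_num, Real.sqrt_sq (by norm_num : (0:ℝ) ≤ 2)]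
  -- eigenvalue bounds
  set lmin := lamMinS s d S with hlmindef
  set lmax := lamMaxS s d S with hlmaxdef
  set CS := ∑ i, ∑ j, |S i j| with hCSdef
  have hSub : ∀ u ∈ sparseUnit s d, quadForm S u ≤ CS := by
    rintro u ⟨hu1, _⟩
    exact le_trans (le_abs_self _) (quadForm_abs_le_of_unit S u hu1)
  have hSbddA : BddAbove (quadForm S '' sparseUnit s d) := by
    refine ⟨CS, ?_⟩; rintro x ⟨u, hu, rfl⟩; exact hSub u hu
  have hSbddB : BddBelow (quadForm S '' sparseUnit s d) := by
    refine ⟨c, ?_⟩; rintro x ⟨u, hu, rfl⟩; exact hlb u hu.1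
  have hlmax_ge : ∀ u ∈ sparseUnit s d, quadForm S u ≤ lmax :=
    fun u hu => le_csSup hSbddA ⟨u, hu, rfl⟩
  have hlmin_le : ∀ u ∈ sparseUnit s d, lmin ≤ quadForm S u :=
    fun u hu => csInf_le hSbddB ⟨u, hu, rfl⟩
  have hlmin_pos : 0 < lmin := by
    rw [hlmindef]
    refine lt_of_lt_of_le hc (le_csInf ⟨_, ⟨v, ⟨hv1, hvs⟩, rfl⟩⟩ ?_)
    rintro x ⟨u, hu, rfl⟩
    exact hlb u hu.1
  have hlmax_pos : 0 < lmax := lt_of_lt_of_le hqv_pos (hlmax_ge v ⟨hv1, hvs⟩)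
  -- Step A
  set t := Bform S v w with htdef
  have hBvw_sq := Bform_sq_le hS hSsym v w
  have ht2 : t^2 ≤ (α * β)^2 := by
    rw [htdef, mul_pow, hα2, hβ2]; exact hBvw_sq
  have htlb : -(α * β) ≤ t := by nlinarith [ht2, mul_pos hα hβ]
  have e1 : quadForm S (a - b) = 2 - 2 * (α⁻¹ * β⁻¹ * t) := by
    have eB : Bform S a b = α⁻¹ * β⁻¹ * t := by
      rw [hadef, hbdef, Bform_smul_left, Bform_smul_right, htdef]; ring
    have e : quadForm S (a - b) = quadForm S a - 2 * Bform S a b + quadForm S b := by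
      simp only [quadForm_eq_Bform, Bform_sub_left, Bform_sub_right]
      rw [Bform_comm hSsym b a]; ring
    rw [e, hqa, hqb, eB]; ring
  have e2 : quadForm S (v - w) = α^2 + β^2 - 2 * t := by
    have e : quadForm S (v - w) = quadForm S v - 2 * Bform S v w + quadForm S w := by
      simp only [quadForm_eq_Bform, Bform_sub_left, Bform_sub_right]
      rw [Bform_comm hSsym w v]; ring
    rw [e, hα2, hβ2, htdef]; ring
  have hαβ : 0 < α * β := mul_pos hα hβ
  have stepA : quadForm S (a - b) * (α + β)^2 ≤ 4 * quadForm S (v - w) := by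
    have e1' : quadForm S (a - b) = (2 * (α * β) - 2 * t) / (α * β) := by
      rw [e1]; field_simp
    rw [e1', div_mul_eq_mul_div, div_le_iff₀ hαβ, e2]
    exact net_alg α β t hα hβ htlb
  -- Step B
  have stepB : quadForm S (v - w) ≤ lmax * (l2norm (v - w))^2 := by
    rcases eq_or_ne v w with rfl | hvw
    · simp only [sub_self]
      have h1 : quadForm S (0 : Fin d → ℝ) = 0 := by simp [quadForm]
      have h2 : l2norm (0 : Fin d → ℝ) = 0 := by simp [l2norm]
      rw [h1, h2]; norm_num
    · set z := v - w with hzdef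
      have hz0 : z ≠ 0 := sub_ne_zero.mpr hvw
      have hsum := sum_sq_pos hz0
      set n := Real.sqrt (∑ i, (z i)^2) with hndef
      have hn : 0 < n := Real.sqrt_pos.mpr hsum
      have hn2 : n^2 = ∑ i, (z i)^2 := by rw [hndef]; exact Real.sq_sqrt hsum.le
      have hzs : ∀ i, v i = 0 → z i = 0 := by
        intro i h; rw [hzdef]; simp [h, (hsupp i).mp h]
      set uz := n⁻¹ • z with huzdef
      have huzsum : ∑ i, (uz i)^2 = 1 := by
        rw [huzdef]
        simp only [Pi.smul_apply, smul_eq_mul, mul_pow]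
        rw [← Finset.mul_sum, inv_pow, hn2]
        exact inv_mul_cancel₀ hsum.ne'
      have huzspars : (Finset.univ.filter fun i => uz i ≠ 0).card ≤ s := by
        refine le_trans (Finset.card_le_card ?_) hvs
        intro i hi
        simp only [Finset.mem_filter, Finset.mem_univ, true_and] at hi ⊢
        intro hvi
        exact hi (by rw [huzdef]; simp [hzs i hvi])
      have hle := hlmax_ge uz ⟨huzsum, huzspars⟩
      have hq_eq : quadForm S z = n^2 * quadForm S uz := by
        rw [huzdef, quadForm_smul, inv_pow, hn2]
        field_simp
      have hl2 : l2norm z = n := rfl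
      rw [hl2, hq_eq]
      calc n^2 * quadForm S uz ≤ n^2 * lmax :=
            mul_le_mul_of_nonneg_left hle (sq_nonneg n)
        _ = lmax * n^2 := by ring
  -- Step C
  have stepC : 4 * lmin ≤ (α + β)^2 := by
    have hαl : Real.sqrt lmin ≤ α := by
      rw [hαdef]; exact Real.sqrt_le_sqrt (hlmin_le v ⟨hv1, hvs⟩)
    have hβl : Real.sqrt lmin ≤ β := by
      rw [hβdef]; exact Real.sqrt_le_sqrt (hlmin_le w ⟨hw1, hws⟩)
    exact net_alg2 α β lmin hlmin_pos.le hαl hβl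
  -- combine
  have hqab_nonneg := quadForm_nonneg hS (a - b)
  have hcomb : quadForm S (a - b) ≤ lmax / lmin * (l2norm (v - w))^2 := by
    rw [div_mul_eq_mul_div, le_div_iff₀ hlmin_pos]
    have h1 : 4 * (quadForm S (a - b) * lmin) ≤ quadForm S (a - b) * (α + β)^2 := by
      calc 4 * (quadForm S (a - b) * lmin) = quadForm S (a - b) * (4 * lmin) := by ring
        _ ≤ _ := mul_le_mul_of_nonneg_left stepC hqab_nonneg
    linarith [stepA, stepB, h1]
  have hγn0 : 0 ≤ lmax / lmin := le_of_lt (div_pos hlmax_pos hlmin_pos)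
  have hn0 : 0 ≤ l2norm (v - w) := Real.sqrt_nonneg _
  have bound1 : Real.sqrt (quadForm S (a - b)) ≤ gammaS s d S * l2norm (v - w) := by
    have h := Real.sqrt_le_sqrt hcomb
    rwa [Real.sqrt_mul hγn0, Real.sqrt_sq hn0] at h
  have hγ0 : 0 ≤ gammaS s d S := Real.sqrt_nonneg _
  calc |(|quadForm M a| - |quadForm M b|)|
      ≤ |quadForm M a - quadForm M b| := abs_abs_sub_abs_le_abs_sub _ _
    _ = |Bform M (a - b) (a + b)| := by rw [hdiff]
    _ ≤ Q * Real.sqrt (quadForm S (a - b)) * Real.sqrt (quadForm S (a + b)) :=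
        keyB (a - b) (a + b) (fun i h => by simp [has i h, hbs i h])
          (fun i h => by simp [has i h, hbs i h])
    _ ≤ Q * (gammaS s d S * l2norm (v - w)) * 2 := by
        apply mul_le_mul (mul_le_mul_of_nonneg_left bound1 hQ0) bound2 (Real.sqrt_nonneg _)
        exact mul_nonneg hQ0 (mul_nonneg hγ0 hn0)
    _ = 2 * gammaS s d S * l2norm (v - w) * Q := by ring
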